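/- Let (h_n) be a regular sequence of functions on [0,1] and let h : [0,1] → ℝ be continuous and satisfy ∑_{n=0}^∞ ∫₀¹ h_n < ∫₀¹ h. Then there exist ε ∈ (0,1) and a point ξ ∈ [0,1] such that for every m ∈ ℕ one has ∑_{n=0}^m (1+ε)^n·h_n(ξ) ≤ h(ξ) − ε. -/
import Mathlib


open MeasureTheory Filter Set

noncomputable section

/-- A sequence of functions on `[0,1]` is *regular* if each member is continuous and
nonnegative on `[0,1]` and has integral over `[0,1]` strictly less than `2⁻ⁿ`. -/
def RegularSeq (h : ℕ → ℝ → ℝ) : Prop :=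
  ∀ n : ℕ, ContinuousOn (h n) (Set.Icc 0 1) ∧
    (∀ x ∈ Set.Icc (0:ℝ) 1, 0 ≤ h n x) ∧
    (∫ x in (0:ℝ)..1, h n x) < (1/2 : ℝ) ^ n

/-- The set `Ω(𝔥)` of points of `[0,1]` at which the partial sums of `∑ hₙ(x)` are
bounded above. -/
def Omega (h : ℕ → ℝ → ℝ) : Set ℝ :=
  {x ∈ Set.Icc (0:ℝ) 1 | ∃ γ : ℝ, ∀ m : ℕ, ∑ n ∈ Finset.range (m+1), h n x ≤ γ}

/-- A subset `X ⊆ [0,1]` is *almost full* if `Ω(𝔥) ⊆ X` for some regular sequence `𝔥`. -/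
def AlmostFull (X : Set ℝ) : Prop :=
  ∃ h : ℕ → ℝ → ℝ, RegularSeq h ∧ Omega h ⊆ X

/-- If `(hₙ)` is regular, `h` is continuous on `[0,1]`, and `∑ₙ ∫₀¹ hₙ < ∫₀¹ h`, then there
are `ε ∈ (0,1)` and `ξ ∈ [0,1]` with `∑_{n=0}^m (1+ε)ⁿ hₙ(ξ) ≤ h(ξ) - ε` for all `m`. -/
theorem stmt1 (hseq : ℕ → ℝ → ℝ) (hreg : RegularSeq hseq)
    (h : ℝ → ℝ) (hcont : ContinuousOn h (Set.Icc 0 1))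
    (hlt : (∑' n : ℕ, ∫ x in (0:ℝ)..1, hseq n x) < ∫ x in (0:ℝ)..1, h x) :
    ∃ ε ∈ Set.Ioo (0:ℝ) 1, ∃ ξ ∈ Set.Icc (0:ℝ) 1,
      ∀ m : ℕ, ∑ n ∈ Finset.range (m+1), (1+ε)^n * hseq n ξ ≤ h ξ - ε := by
  classical
  set I : ℕ → ℝ := fun n => ∫ x in (0:ℝ)..1, hseq n x with hIdef
  have hInn : ∀ n, 0 ≤ I n := fun n =>
    intervalIntegral.integral_nonneg (by norm_num) (fun x hx => (hreg n).2.1 x hx)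
  have hIlt : ∀ n, I n < (1/2:ℝ)^n := fun n => (hreg n).2.2
  have hsum : Summable I :=
    Summable.of_nonneg_of_le hInn (fun n => (hIlt n).le)
      (summable_geometric_of_lt_one (by norm_num) (by norm_num))
  set S : ℝ := ∑' n, I n with hSdef
  set D : ℝ := ∫ x in (0:ℝ)..1, h x with hDdef
  have hSD : S < D := hlt
  set ε : ℝ := min (1/2) ((D - S)/6) with hεdef
  have hε0 : 0 < ε := lt_min (by norm_num) (by linarith)
  have hεhalf : ε ≤ 1/2 := min_le_left _ _
  have hε6 : ε ≤ (D - S)/6 := min_le_right _ _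
  have hε1 : ε < 1 := lt_of_le_of_lt hεhalf (by norm_num)
  -- integrability facts
  have hint : ∀ n, IntervalIntegrable (hseq n) volume 0 1 := fun n =>
    ((hreg n).1.mono (by rw [Set.uIcc_of_le (by norm_num : (0:ℝ) ≤ 1)])).intervalIntegrable
  have hhint : IntervalIntegrable h volume 0 1 :=
    (hcont.mono (by rw [Set.uIcc_of_le (by norm_num : (0:ℝ) ≤ 1)])).intervalIntegrable
  -- bound on weighted partial sums of integrals
  have key : ∀ m : ℕ, ∑ n ∈ Finset.range (m+1), (1+ε)^n * I n < D - ε := by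
    intro m
    have hterm : ∀ n : ℕ, (1+ε)^n * I n ≤ I n + (((1+ε)/2)^n - (1/2:ℝ)^n) := by
      intro n
      have h1 : (1:ℝ) ≤ (1+ε)^n := one_le_pow₀ (by linarith : (1:ℝ) ≤ 1+ε)
      have h2 : ((1+ε)^n - 1) * I n ≤ ((1+ε)^n - 1) * (1/2:ℝ)^n :=
        mul_le_mul_of_nonneg_left (hIlt n).le (by linarith)
      have h3 : ((1+ε)^n - 1) * (1/2:ℝ)^n = ((1+ε)/2)^n - (1/2:ℝ)^n := by
        rw [show ((1+ε)/2:ℝ) = (1+ε)*(1/2) by ring, mul_pow]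
        ring
      nlinarith [h2, h3]
    have hsum2 : Summable (fun n : ℕ => ((1+ε)/2)^n) :=
      summable_geometric_of_lt_one (by linarith) (by linarith)
    have hsum3 : Summable (fun n : ℕ => ((1/2):ℝ)^n) :=
      summable_geometric_of_lt_one (by norm_num) (by norm_num)
    have hA : ∑ n ∈ Finset.range (m+1), I n ≤ S :=
      Summable.sum_le_tsum _ (fun n _ => hInn n) hsum
    have hB : ∑ n ∈ Finset.range (m+1), (((1+ε)/2)^n - (1/2:ℝ)^n)
        ≤ ∑' n : ℕ, (((1+ε)/2)^n - (1/2:ℝ)^n) := by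
      refine Summable.sum_le_tsum _ (fun n _ => ?_) (hsum2.sub hsum3)
      have : ((1/2:ℝ))^n ≤ ((1+ε)/2)^n :=
        pow_le_pow_left₀ (by norm_num) (by linarith) n
      linarith
    have hT : ∑' n : ℕ, (((1+ε)/2)^n - (1/2:ℝ)^n) = (1 - (1+ε)/2)⁻¹ - 2 := by
      rw [Summable.tsum_sub hsum2 hsum3, tsum_geometric_of_lt_one (by linarith) (by linarith),
        tsum_geometric_of_lt_one (by norm_num : (0:ℝ) ≤ 1/2) (by norm_num)]
      norm_num
    have hT4 : (1 - (1+ε)/2)⁻¹ - 2 ≤ 4 * ε := by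
      have h12 : (0:ℝ) < 1 - ε := by linarith
      have heq : (1 - (1+ε)/2)⁻¹ = 2 / (1-ε) := by
        rw [show (1 - (1+ε)/2 : ℝ) = (1-ε)/2 by ring, inv_div]
      rw [heq, sub_le_iff_le_add, div_le_iff₀ h12]
      nlinarith
    have hsumle : ∑ n ∈ Finset.range (m+1), (1+ε)^n * I n
        ≤ ∑ n ∈ Finset.range (m+1), (I n + (((1+ε)/2)^n - (1/2:ℝ)^n)) :=
      Finset.sum_le_sum (fun n _ => hterm n)
    rw [Finset.sum_add_distrib] at hsumle
    have : ∑ n ∈ Finset.range (m+1), (1+ε)^n * I n ≤ S + 4*ε := by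
      calc ∑ n ∈ Finset.range (m+1), (1+ε)^n * I n
          ≤ ∑ n ∈ Finset.range (m+1), I n
            + ∑ n ∈ Finset.range (m+1), (((1+ε)/2)^n - (1/2:ℝ)^n) := hsumle
        _ ≤ S + ((1 - (1+ε)/2)⁻¹ - 2) := by rw [← hT]; exact add_le_add hA hB
        _ ≤ S + 4*ε := by linarith
    linarith
  -- the nested compact sets
  set F : ℕ → ℝ → ℝ := fun m x => ∑ n ∈ Finset.range (m+1), (1+ε)^n * hseq n x with hFdef
  have hFcont : ∀ m, ContinuousOn (F m) (Set.Icc 0 1) := by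
    intro m
    apply continuousOn_finset_sum
    intro n _
    exact ((hreg n).1.const_smul ((1+ε)^n) : )
  have hFint : ∀ m, IntervalIntegrable (F m) volume 0 1 := fun m =>
    ((hFcont m).mono (by rw [Set.uIcc_of_le (by norm_num : (0:ℝ) ≤ 1)])).intervalIntegrable
  have hFI : ∀ m, (∫ x in (0:ℝ)..1, F m x) = ∑ n ∈ Finset.range (m+1), (1+ε)^n * I n := by
    intro m
    rw [hFdef]
    rw [intervalIntegral.integral_finset_sum (fun n _ => ((hint n).const_mul _))]
    exact Finset.sum_congr rfl fun n _ => intervalIntegral.integral_const_mul _ _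
  set K : ℕ → Set ℝ := fun m => {x ∈ Set.Icc (0:ℝ) 1 | F m x ≤ h x - ε} with hKdef
  have hKclosed : ∀ m, IsClosed (K m) := by
    intro m
    have : K m = Set.Icc (0:ℝ) 1 ∩ (fun x => F m x - h x) ⁻¹' Set.Iic (-ε) := by
      ext x
      simp only [hKdef, Set.mem_sep_iff, Set.mem_inter_iff, Set.mem_preimage, Set.mem_Iic]
      constructor
      · rintro ⟨hx, hle⟩; exact ⟨hx, by linarith⟩
      · rintro ⟨hx, hle⟩; exact ⟨hx, by linarith⟩
    rw [this]
    exact ((hFcont m).sub hcont).preimage_isClosed_of_isClosed isClosed_Icc isClosed_Iic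
  have hKnonempty : ∀ m, (K m).Nonempty := by
    intro m
    by_contra hemp
    rw [Set.not_nonempty_iff_eq_empty] at hemp
    have hstrict : ∀ x ∈ Set.Icc (0:ℝ) 1, h x - ε ≤ F m x := by
      intro x hx
      by_contra hcon
      push_neg at hcon
      have : x ∈ K m := ⟨hx, hcon.le⟩
      rw [hemp] at this
      exact this
    have hmono : (∫ x in (0:ℝ)..1, (h x - ε)) ≤ ∫ x in (0:ℝ)..1, F m x :=
      intervalIntegral.integral_mono_on (by norm_num)
        (hhint.sub intervalIntegrable_const) (hFint m) hstrict
    have hleft : (∫ x in (0:ℝ)..1, (h x - ε)) = D - ε := by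
      rw [intervalIntegral.integral_sub hhint intervalIntegrable_const,
        intervalIntegral.integral_const]
      simp [hDdef]
    rw [hleft, hFI m] at hmono
    exact absurd hmono (not_le.mpr (key m))
  have hKsub : ∀ m, K (m+1) ⊆ K m := by
    intro m x hx
    obtain ⟨hxI, hxle⟩ := hx
    refine ⟨hxI, le_trans ?_ hxle⟩
    rw [hFdef]
    simp only
    rw [Finset.sum_range_succ (n := m+1)]
    have : 0 ≤ (1+ε)^(m+1) * hseq (m+1) x :=
      mul_nonneg (pow_nonneg (by linarith) _) ((hreg (m+1)).2.1 x hxI)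
    linarith
  have hK0 : IsCompact (K 0) :=
    isCompact_Icc.of_isClosed_subset (hKclosed 0) (fun x hx => hx.1)
  obtain ⟨ξ, hξ⟩ := IsCompact.nonempty_iInter_of_sequence_nonempty_isCompact_isClosed
    K hKsub hKnonempty hK0 hKclosed
  simp only [Set.mem_iInter] at hξ
  exact ⟨ε, ⟨hε0, hε1⟩, ξ, (hξ 0).1, fun m => (hξ m).2⟩
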